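/- arXiv:1609.03589 — 2 statements merged into one kernel-verified Lean document; each statement's English description precedes it below -/
import Mathlib

section
/- Suppose {mⁱ}_{i=1}^∞ is a sequence of nonnegative reals with Σ mⁱ = M < ∞, and suppose strict concavity: f''(m) < 0 for all m ∈ (0, m̄) where f is twice differentiable on (0,∞). If the sequence minimizes Σ f(mⁱ) among all such decompositions of M, then at most one of the mⁱ lies in the open interval (0, m̄). Consequently, if all mⁱ > 0, the number of nonzero terms is finite (at most 1 + M/m̄). -/
/-- If a nonnegative sequence `m` sums to `M` and minimizes `Σ f(mⁱ)` (sum over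
nonzero terms) among all nonnegative decompositions of `M`, where `f` is twice
continuously differentiable on `(0,∞)` with `f'' < 0` on `(0, m̄)`, then at most one
`mⁱ` lies in `(0, m̄)`, and the set of nonzero terms is finite. -/
theorem stmt4 (f : ℝ → ℝ) (mbar M : ℝ) (hmbar : 0 < mbar)
    (hf : ContDiffOn ℝ 2 f (Set.Ioi 0))
    (hconc : ∀ x : ℝ, 0 < x → x < mbar → deriv (deriv f) x < 0)
    (m : ℕ → ℝ) (hpos : ∀ i, 0 ≤ m i) (hsum : Summable m) (hM : (∑' i, m i) = M)
    (hfs : Summable fun i => if m i = 0 then 0 else f (m i))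
    (hmin : ∀ mt : ℕ → ℝ, (∀ i, 0 ≤ mt i) → Summable mt → (∑' i, mt i) = M →
      (Summable fun i => if mt i = 0 then 0 else f (mt i)) →
      (∑' i, if m i = 0 then 0 else f (m i)) ≤ ∑' i, if mt i = 0 then 0 else f (mt i)) :
    (∀ i j, i ≠ j → ¬(m i ∈ Set.Ioo 0 mbar ∧ m j ∈ Set.Ioo 0 mbar)) ∧
      {i | m i ≠ 0}.Finite := by
  classical
  have hconcave : StrictConcaveOn ℝ (Set.Ioo 0 mbar) f := by
    apply strictConcaveOn_of_deriv2_neg (convex_Ioo 0 mbar)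
      (hf.continuousOn.mono Set.Ioo_subset_Ioi_self)
    intro x hx
    rw [interior_Ioo] at hx
    simpa using hconc x hx.1 hx.2
  -- key four point inequality
  have key4 : ∀ x1 x2 x3 x4 : ℝ, x1 ∈ Set.Ioo 0 mbar → x4 ∈ Set.Ioo 0 mbar →
      x1 < x2 → x1 < x3 → x1 + x4 = x2 + x3 → f x1 + f x4 < f x2 + f x3 := by
    intro x1 x2 x3 x4 h1 h4 h12 h13 hs
    have hd : 0 < x4 - x1 := by linarith
    set l : ℝ := (x4 - x2) / (x4 - x1) with hldef
    have hl4 : l * (x4 - x1) = x4 - x2 := div_mul_cancel₀ _ hd.ne'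
    have hl0 : 0 < l := div_pos (by linarith) hd
    have hl1 : l < 1 := by
      rw [hldef, div_lt_one hd]; linarith
    have hne : x1 ≠ x4 := by intro h; rw [h] at hd; linarith
    have A := hconcave.2 h1 h4 hne hl0 (by linarith : (0:ℝ) < 1 - l) (by ring)
    have B := hconcave.2 h1 h4 hne (by linarith : (0:ℝ) < 1 - l) hl0 (by ring)
    rw [smul_eq_mul, smul_eq_mul, smul_eq_mul, smul_eq_mul] at A
    rw [smul_eq_mul, smul_eq_mul, smul_eq_mul, smul_eq_mul] at B
    have e2 : l * x1 + (1 - l) * x4 = x2 := by nlinarith [hl4]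
    have e3 : (1 - l) * x1 + l * x4 = x3 := by nlinarith [hl4]
    rw [e2] at A
    rw [e3] at B
    nlinarith [A, B]
  -- the main pairwise statement, with WLOG m i ≤ m j
  have key : ∀ i j : ℕ, i ≠ j → m i ∈ Set.Ioo 0 mbar → m j ∈ Set.Ioo 0 mbar →
      m i ≤ m j → False := by
    intro i j hij hi hj hle
    obtain ⟨hi1, hi2⟩ := hi
    obtain ⟨hj1, hj2⟩ := hj
    set ε : ℝ := min (m i) (mbar - m j) / 2 with hεdef
    have hε : 0 < ε := by
      apply div_pos _ (by norm_num)
      exact lt_min hi1 (by linarith)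
    have hεa : ε < m i := by
      have : min (m i) (mbar - m j) ≤ m i := min_le_left _ _
      rw [hεdef]; linarith
    have hεb : m j + ε < mbar := by
      have : min (m i) (mbar - m j) ≤ mbar - m j := min_le_right _ _
      rw [hεdef]; linarith
    set mt : ℕ → ℝ := Function.update (Function.update m i (m i - ε)) j (m j + ε)
      with hmt
    have hmti : mt i = m i - ε := by
      rw [hmt, Function.update_of_ne hij, Function.update_self]
    have hmtj : mt j = m j + ε := by
      rw [hmt, Function.update_self]
    have hmtk : ∀ k, k ≠ i → k ≠ j → mt k = m k := by
      intro k hki hkj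
      rw [hmt, Function.update_of_ne hkj, Function.update_of_ne hki]
    have hmtpos : ∀ k, 0 ≤ mt k := by
      intro k
      rcases eq_or_ne k i with rfl | hki
      · rw [hmti]; linarith
      rcases eq_or_ne k j with rfl | hkj
      · rw [hmtj]; linarith
      · rw [hmtk k hki hkj]; exact hpos k
    have hs0 : HasSum m M := hM ▸ hsum.hasSum
    have hs1 := hs0.update i (m i - ε)
    have hs2 := hs1.update j (m j + ε)
    have hupij : Function.update m i (m i - ε) j = m j := by
      rw [Function.update_of_ne (Ne.symm hij)]
    rw [hupij] at hs2
    have hsmt : HasSum mt M := by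
      rw [hmt]
      convert hs2 using 1
      rfl
      ring
    -- the objective sums
    set g : ℕ → ℝ := fun k => if m k = 0 then 0 else f (m k) with hg
    have hS : HasSum g (∑' k, g k) := hfs.hasSum
    have hgi : g i = f (m i) := by rw [hg]; simp only; rw [if_neg hi1.ne']
    have hgj : g j = f (m j) := by rw [hg]; simp only; rw [if_neg hj1.ne']
    have hgteq : (fun k => if mt k = 0 then 0 else f (mt k)) =
        Function.update (Function.update g i (f (m i - ε))) j (f (m j + ε)) := by
      have hne1 : m i - ε ≠ 0 := ne_of_gt (by linarith)
      have hne2 : m j + ε ≠ 0 := ne_of_gt (by linarith)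
      funext n
      rcases eq_or_ne n j with rfl | hkj
      · rw [Function.update_self, hmtj, if_neg hne2]
      rcases eq_or_ne n i with rfl | hki
      · rw [Function.update_of_ne hkj, Function.update_self, hmti, if_neg hne1]
      · rw [Function.update_of_ne hkj, Function.update_of_ne hki, hmtk n hki hkj]
    have hS1 := hS.update i (f (m i - ε))
    have hS2 := hS1.update j (f (m j + ε))
    have hupij2 : Function.update g i (f (m i - ε)) j = g j :=
      Function.update_of_ne (Ne.symm hij) _ _
    rw [hupij2, hgi, hgj] at hS2
    rw [← hgteq] at hS2
    -- apply minimality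
    have hle2 := hmin mt hmtpos hsmt.summable hsmt.tsum_eq hS2.summable
    rw [hS2.tsum_eq] at hle2
    -- strict inequality from concavity
    have hstrict := key4 (m i - ε) (m i) (m j) (m j + ε)
      ⟨by linarith, by linarith⟩ ⟨by linarith, hεb⟩
      (by linarith) (by linarith) (by ring)
    linarith
  have part1 : ∀ i j, i ≠ j → ¬(m i ∈ Set.Ioo 0 mbar ∧ m j ∈ Set.Ioo 0 mbar) := by
    intro i j hij ⟨hi, hj⟩
    rcases le_total (m i) (m j) with h | h
    · exact key i j hij hi hj h
    · exact key j i (Ne.symm hij) hj hi h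
  refine ⟨part1, ?_⟩
  have hev : ∀ᶠ i in Filter.atTop, m i < mbar :=
    hsum.tendsto_atTop_zero.eventually_lt_const hmbar
  obtain ⟨N, hN⟩ := Filter.eventually_atTop.1 hev
  have hsub : {i | m i ≠ 0} ⊆ Set.Iio N ∪ {i | m i ∈ Set.Ioo 0 mbar} := by
    intro k hk
    by_cases hkN : k < N
    · exact Or.inl hkN
    · right
      exact ⟨lt_of_le_of_ne (hpos k) (Ne.symm hk), hN k (le_of_not_gt hkN)⟩
  have hss : {i | m i ∈ Set.Ioo 0 mbar}.Subsingleton := by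
    intro i hi j hj
    by_contra hij
    exact part1 i j hij ⟨hi, hj⟩
  exact Set.Finite.subset ((Set.finite_Iio N).union hss.finite) hsub
end

section
/- Let n ≥ 2, let m¹,…,mⁿ > 0, and define F(x₁,…,xₙ) = Σᵢ mⁱ q(xᵢ) + (1/(4π)) Σ_{i≠j} mⁱ mʲ / |xᵢ−xⱼ| on n-tuples of distinct points of ℝ³, where q(x) = ⟨Hx, x⟩ for a symmetric positive-definite 3×3 matrix H with ⟨Hx,x⟩ ≥ C|x|² for some C > 0. Then F is coercive (F → ∞ as max|xᵢ| → ∞ or as min_{i≠j}|xᵢ−xⱼ| → 0) and attains its infimum at some n-tuple of distinct points. -/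
open Filter

/-- The interaction energy `F(x₁,…,xₙ) = Σᵢ mⁱ q(xᵢ) + (1/4π) Σ_{i≠j} mⁱmʲ/|xᵢ−xⱼ|`
on `n`-tuples of distinct points of ℝ³ (with `q` a positive-definite quadratic form)
is coercive on its domain and attains its infimum. -/
theorem stmt5 (n : ℕ) (hn : 2 ≤ n) (m : Fin n → ℝ) (hm : ∀ i, 0 < m i)
    (H : Matrix (Fin 3) (Fin 3) ℝ) (hH : H.IsSymm)
    (q : EuclideanSpace ℝ (Fin 3) → ℝ)
    (hq : ∀ x, q x = ∑ k, ∑ l, H k l * x k * x l)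
    (C : ℝ) (hC : 0 < C) (hcoer : ∀ x, C * ‖x‖ ^ 2 ≤ q x)
    (F : {x : Fin n → EuclideanSpace ℝ (Fin 3) // ∀ i j, i ≠ j → x i ≠ x j} → ℝ)
    (hF : ∀ x, F x = (∑ i, m i * q (x.1 i)) +
      (4 * Real.pi)⁻¹ * ∑ i, ∑ j, if i ≠ j then m i * m j / ‖x.1 i - x.1 j‖ else 0) :
    Tendsto F (cocompact _) atTop ∧ ∃ x, ∀ y, F x ≤ F y := by
  have hπ : (0:ℝ) < (4 * Real.pi)⁻¹ := by
    rw [inv_pos]; positivity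
  have hne : Nonempty (Fin n) := ⟨⟨0, by omega⟩⟩
  have hune : (Finset.univ : Finset (Fin n)).Nonempty := Finset.univ_nonempty
  set μ : ℝ := Finset.univ.inf' hune m with hμdef
  have hμpos : 0 < μ := by
    rw [hμdef, Finset.lt_inf'_iff]; exact fun i _ => hm i
  have hμle : ∀ i, μ ≤ m i := fun i => Finset.inf'_le _ (Finset.mem_univ i)
  have hq0 : ∀ v, 0 ≤ q v := fun v => le_trans (by positivity) (hcoer v)
  have hterm0 : ∀ (x : {x : Fin n → EuclideanSpace ℝ (Fin 3) // ∀ i j, i ≠ j → x i ≠ x j})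
      (i j : Fin n), 0 ≤ (if i ≠ j then m i * m j / ‖x.1 i - x.1 j‖ else 0) := by
    intro x i j
    split
    · have := (hm i).le; have := (hm j).le; positivity
    · exact le_rfl
  have hS0 : ∀ x : {x : Fin n → EuclideanSpace ℝ (Fin 3) // ∀ i j, i ≠ j → x i ≠ x j},
      0 ≤ ∑ i, ∑ j, if i ≠ j then m i * m j / ‖x.1 i - x.1 j‖ else 0 :=
    fun x => Finset.sum_nonneg fun i _ => Finset.sum_nonneg fun j _ => hterm0 x i j
  have hA0 : ∀ x : {x : Fin n → EuclideanSpace ℝ (Fin 3) // ∀ i j, i ≠ j → x i ≠ x j},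
      0 ≤ ∑ i, m i * q (x.1 i) :=
    fun x => Finset.sum_nonneg fun i _ => mul_nonneg (hm i).le (hq0 _)
  -- key lower bound 1
  have key1 : ∀ (x : {x : Fin n → EuclideanSpace ℝ (Fin 3) // ∀ i j, i ≠ j → x i ≠ x j})
      (i : Fin n), C * μ * ‖x.1 i‖ ^ 2 ≤ F x := by
    intro x i
    rw [hF x]
    have h1 : μ * (C * ‖x.1 i‖ ^ 2) ≤ m i * (C * ‖x.1 i‖ ^ 2) :=
      mul_le_mul_of_nonneg_right (hμle i) (by positivity)
    have h2 : m i * (C * ‖x.1 i‖ ^ 2) ≤ m i * q (x.1 i) :=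
      mul_le_mul_of_nonneg_left (hcoer _) (hm i).le
    have h3 : m i * q (x.1 i) ≤ ∑ i', m i' * q (x.1 i') :=
      Finset.single_le_sum (fun i' _ => mul_nonneg (hm i').le (hq0 _)) (Finset.mem_univ i)
    have h4 : (0:ℝ) ≤ (4 * Real.pi)⁻¹ *
        ∑ i, ∑ j, if i ≠ j then m i * m j / ‖x.1 i - x.1 j‖ else 0 :=
      mul_nonneg hπ.le (hS0 x)
    nlinarith [h1, h2, h3, h4]
  -- key lower bound 2
  have key2 : ∀ (x : {x : Fin n → EuclideanSpace ℝ (Fin 3) // ∀ i j, i ≠ j → x i ≠ x j})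
      (i j : Fin n), i ≠ j →
      (4 * Real.pi)⁻¹ * (μ * μ / ‖x.1 i - x.1 j‖) ≤ F x := by
    intro x i j hij
    rw [hF x]
    have hd : 0 < ‖x.1 i - x.1 j‖ := by
      rw [norm_pos_iff, sub_ne_zero]; exact x.2 i j hij
    have h1 : μ * μ / ‖x.1 i - x.1 j‖ ≤ m i * m j / ‖x.1 i - x.1 j‖ :=
      div_le_div₀ (mul_nonneg (hm i).le (hm j).le)
        (mul_le_mul (hμle i) (hμle j) hμpos.le (hm i).le) hd le_rfl
    have h2 : m i * m j / ‖x.1 i - x.1 j‖ ≤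
        ∑ j', if i ≠ j' then m i * m j' / ‖x.1 i - x.1 j'‖ else 0 := by
      have := Finset.single_le_sum
        (f := fun j' => if i ≠ j' then m i * m j' / ‖x.1 i - x.1 j'‖ else 0)
        (fun j' _ => hterm0 x i j') (Finset.mem_univ j)
      simpa [hij] using this
    have h3 : (∑ j', if i ≠ j' then m i * m j' / ‖x.1 i - x.1 j'‖ else 0) ≤
        ∑ i', ∑ j', if i' ≠ j' then m i' * m j' / ‖x.1 i' - x.1 j'‖ else 0 :=
      Finset.single_le_sum
        (f := fun i' => ∑ j', if i' ≠ j' then m i' * m j' / ‖x.1 i' - x.1 j'‖ else 0)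
        (fun i' _ => Finset.sum_nonneg fun j' _ => hterm0 x i' j') (Finset.mem_univ i)
    have h4 := hA0 x
    have h5 : (4 * Real.pi)⁻¹ * (μ * μ / ‖x.1 i - x.1 j‖) ≤
        (4 * Real.pi)⁻¹ * ∑ i', ∑ j', if i' ≠ j' then m i' * m j' / ‖x.1 i' - x.1 j'‖ else 0 :=
      mul_le_mul_of_nonneg_left (h1.trans (h2.trans h3)) hπ.le
    linarith
  -- coercivity
  have hcoerc : Tendsto F (cocompact _) atTop := by
    rw [tendsto_atTop]
    intro b
    set R : ℝ := Real.sqrt ((|b| + 1) / (C * μ)) with hRdef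
    set δ : ℝ := (4 * Real.pi)⁻¹ * (μ * μ) / (|b| + 1) with hδdef
    have hb1 : (0:ℝ) < |b| + 1 := by positivity
    have hδpos : 0 < δ := by positivity
    have hR0 : 0 ≤ R := Real.sqrt_nonneg _
    have hR2 : R ^ 2 = (|b| + 1) / (C * μ) := Real.sq_sqrt (by positivity)
    set A : Set (Fin n → EuclideanSpace ℝ (Fin 3)) :=
      {x | (∀ i, ‖x i‖ ≤ R) ∧ ∀ i j, i ≠ j → δ ≤ ‖x i - x j‖} with hAdef
    have hAsub : A ⊆ {x | ∀ i j, i ≠ j → x i ≠ x j} := by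
      intro x hx i j hij h
      have := hx.2 i j hij
      rw [h, sub_self, norm_zero] at this
      linarith
    have hclosed : IsClosed A := by
      have : A = (⋂ i, {x : Fin n → EuclideanSpace ℝ (Fin 3) | ‖x i‖ ≤ R}) ∩
          ⋂ i, ⋂ j, {x : Fin n → EuclideanSpace ℝ (Fin 3) | i ≠ j → δ ≤ ‖x i - x j‖} := by
        ext x; simp [hAdef, Set.mem_iInter]
      rw [this]
      apply IsClosed.inter
      · exact isClosed_iInter fun i =>
          isClosed_le (continuous_apply i).norm continuous_const
      · refine isClosed_iInter fun i => isClosed_iInter fun j => ?_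
        by_cases hij : i = j
        · subst hij; simp
        · have : {x : Fin n → EuclideanSpace ℝ (Fin 3) | i ≠ j → δ ≤ ‖x i - x j‖} =
              {x : Fin n → EuclideanSpace ℝ (Fin 3) | δ ≤ ‖x i - x j‖} := by
            ext x; simp [hij]
          rw [this]
          exact isClosed_le continuous_const
            ((continuous_apply i).sub (continuous_apply j)).norm
    have hbdd : Bornology.IsBounded A := by
      apply (Metric.isBounded_closedBall
        (x := (0 : Fin n → EuclideanSpace ℝ (Fin 3))) (r := R)).subset
      intro x hx
      rw [Metric.mem_closedBall, dist_zero_right]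
      exact (pi_norm_le_iff_of_nonneg hR0).2 hx.1
    have hAcomp : IsCompact A := Metric.isCompact_of_isClosed_isBounded hclosed hbdd
    have hKcomp : IsCompact (Subtype.val ⁻¹' A :
        Set {x : Fin n → EuclideanSpace ℝ (Fin 3) // ∀ i j, i ≠ j → x i ≠ x j}) := by
      rw [Topology.IsEmbedding.subtypeVal.isCompact_iff]
      have : Subtype.val '' (Subtype.val ⁻¹' A :
          Set {x : Fin n → EuclideanSpace ℝ (Fin 3) // ∀ i j, i ≠ j → x i ≠ x j}) = A := by
        rw [Set.image_preimage_eq_inter_range, Subtype.range_coe_subtype]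
        exact Set.inter_eq_left.2 hAsub
      rw [this]; exact hAcomp
    rw [Filter.eventually_iff, Filter.mem_cocompact]
    refine ⟨Subtype.val ⁻¹' A, hKcomp, ?_⟩
    intro x hx
    simp only [Set.mem_compl_iff, Set.mem_preimage, hAdef, Set.mem_setOf_eq, not_and_or,
      not_forall] at hx
    simp only [Set.mem_setOf_eq]
    rcases hx with ⟨i, hi⟩ | ⟨i, j, hij⟩
    · push_neg at hi
      have h1 := key1 x i
      have hsq : R ^ 2 ≤ ‖x.1 i‖ ^ 2 := by nlinarith
      have : |b| + 1 ≤ C * μ * ‖x.1 i‖ ^ 2 := by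
        rw [hR2] at hsq
        calc |b| + 1 = C * μ * ((|b| + 1) / (C * μ)) := by field_simp
          _ ≤ C * μ * ‖x.1 i‖ ^ 2 := mul_le_mul_of_nonneg_left hsq (by positivity)
      nlinarith [abs_nonneg b, le_abs_self b]
    · push_neg at hij
      obtain ⟨hij, hlt⟩ := hij
      have hd : 0 < ‖x.1 i - x.1 j‖ := by
        rw [norm_pos_iff, sub_ne_zero]; exact x.2 i j hij
      have h2 := key2 x i j hij
      have hkey : |b| + 1 ≤ (4 * Real.pi)⁻¹ * (μ * μ / ‖x.1 i - x.1 j‖) := by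
        have hstep : (4 * Real.pi)⁻¹ * (μ * μ) / δ ≤
            (4 * Real.pi)⁻¹ * (μ * μ) / ‖x.1 i - x.1 j‖ :=
          div_le_div_of_nonneg_left (by positivity) hd hlt.le
        have heq : (4 * Real.pi)⁻¹ * (μ * μ) / δ = |b| + 1 := by
          rw [hδdef]; field_simp
        rw [heq, mul_div_assoc] at hstep
        exact hstep
      nlinarith [abs_nonneg b, le_abs_self b]
  refine ⟨hcoerc, ?_⟩
  -- nonemptiness
  have hnS : Nonempty {x : Fin n → EuclideanSpace ℝ (Fin 3) // ∀ i j, i ≠ j → x i ≠ x j} := by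
    refine ⟨⟨fun i => EuclideanSpace.single 0 ((i : ℕ) : ℝ), ?_⟩⟩
    intro i j hij h
    apply hij
    have := congrArg (fun v : EuclideanSpace ℝ (Fin 3) => v 0) h
    simp [EuclideanSpace.single_apply] at this
    exact Fin.val_injective (Nat.cast_injective this)
  -- continuity
  have hqc : Continuous q := by
    have : q = fun v : EuclideanSpace ℝ (Fin 3) => ∑ k, ∑ l, H k l * v k * v l := funext hq
    rw [this]
    refine continuous_finset_sum _ fun k _ => continuous_finset_sum _ fun l _ => ?_
    exact (continuous_const.mul (EuclideanSpace.proj k).continuous).mul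
      (EuclideanSpace.proj l).continuous
  have hcont : Continuous F := by
    rw [show F = _ from funext hF]
    apply Continuous.add
    · refine continuous_finset_sum _ fun i _ => Continuous.mul continuous_const ?_
      exact hqc.comp ((continuous_apply i).comp continuous_subtype_val)
    · apply continuous_const.mul
      refine continuous_finset_sum _ fun i _ => continuous_finset_sum _ fun j _ => ?_
      by_cases hij : i = j
      · subst hij; simpa using continuous_const
      · have : (fun x : {x : Fin n → EuclideanSpace ℝ (Fin 3) // ∀ i j, i ≠ j → x i ≠ x j} =>
            if i ≠ j then m i * m j / ‖x.1 i - x.1 j‖ else 0) =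
            fun x : {x : Fin n → EuclideanSpace ℝ (Fin 3) // ∀ i j, i ≠ j → x i ≠ x j} =>
            m i * m j / ‖x.1 i - x.1 j‖ := by
          ext x; simp [hij]
        rw [this]
        apply continuous_const.div
        · exact (((continuous_apply i).comp continuous_subtype_val).sub
            ((continuous_apply j).comp continuous_subtype_val)).norm
        · intro x
          rw [norm_ne_zero_iff, sub_ne_zero]
          exact x.2 i j hij
  exact hcont.exists_forall_le hcoerc
end
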